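/- Let d : ℝ × ℝ → [0,∞) be twice continuously differentiable on ℝ² \ Δ (not necessarily continuous on Δ), symmetric, with d(x,x) = 0 for all x, and ∂₁∂₂ d(a,b) ≥ 0 for all (a,b) ∉ Δ. Then for any x < y < z, d(x,z) ≤ d(x,y) + d(y,z). -/

import Mathlib

def IsDistance (d : ℝ → ℝ → ℝ) : Prop :=
  (∀ x y, 0 ≤ d x y) ∧ (∀ x y, d x y = 0 ↔ x = y) ∧
  (∀ x y, d x y = d y x) ∧ (∀ x y z, d x z ≤ d x y + d y z)

theorem triangle_of_cross_deriv_nonneg (d : ℝ → ℝ → ℝ)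
    (hnonneg : ∀ x y, 0 ≤ d x y)
    (hC2 : ContDiffOn ℝ 2 (fun p : ℝ × ℝ => d p.1 p.2) {p : ℝ × ℝ | p.1 ≠ p.2})
    (hmix : ∀ a b : ℝ, a ≠ b → 0 ≤ deriv (fun s => deriv (fun t => d s t) b) a)
    (hsymm : ∀ x y, d x y = d y x) (hdiag : ∀ x, d x x = 0) :
    ∀ x y z : ℝ, x < y → y < z → d x z ≤ d x y + d y z := by
  intro x y z hxy hyz
  set f : ℝ × ℝ → ℝ := fun p => d p.1 p.2 with hfdef
  set U : Set (ℝ × ℝ) := {p : ℝ × ℝ | p.1 ≠ p.2} with hUdef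
  have hU : IsOpen U := isOpen_ne_fun continuous_fst continuous_snd
  have hdf : ∀ p : ℝ × ℝ, p ∈ U → DifferentiableAt ℝ f p := fun p hp =>
    (hC2.differentiableOn (by norm_num)).differentiableAt (hU.mem_nhds hp)
  -- K1 : partial derivative in second variable
  have K1 : ∀ s t : ℝ, s ≠ t → HasDerivAt (fun t' => d s t') (fderiv ℝ f (s, t) (0, 1)) t := by
    intro s t hst
    have h1 : HasDerivAt (fun t' : ℝ => ((s, t') : ℝ × ℝ)) ((0 : ℝ), (1 : ℝ)) t :=
      (hasDerivAt_const t s).prodMk (hasDerivAt_id t)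
    exact (hdf (s, t) hst).hasFDerivAt.comp_hasDerivAt t h1
  -- Φ : smooth version of the partial derivative
  set Φ : ℝ × ℝ → ℝ := fun p => fderiv ℝ f p (0, 1) with hΦdef
  have hΦd : DifferentiableOn ℝ Φ U := by
    have h1 : ContDiffOn ℝ 1 (fderiv ℝ f) U := hC2.fderiv_of_isOpen hU (by norm_num)
    exact (ContinuousLinearMap.apply ℝ ℝ ((0 : ℝ), (1 : ℝ))).differentiable.comp_differentiableOn
      (h1.differentiableOn one_ne_zero)
  -- Step A : for b > y, the partial derivative in the second variable is monotone in the
  -- first variable on (-∞, b)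
  have stepA : ∀ b : ℝ, y < b →
      deriv (fun t => d x t) b ≤ deriv (fun t => d y t) b := by
    intro b hb
    set ψ : ℝ → ℝ := fun s => deriv (fun t => d s t) b with hψdef
    have hψΦ : ∀ s, s ≠ b → ψ s = Φ (s, b) := fun s hs => (K1 s b hs).deriv
    have hψs : ∀ s ∈ Set.Iio b, DifferentiableAt ℝ ψ s := by
      intro s hs
      have hmem : ((s, b) : ℝ × ℝ) ∈ U := ne_of_lt hs
      have hΦb : DifferentiableAt ℝ (fun s' => Φ (s', b)) s := by
        have hcomp : DifferentiableAt ℝ Φ (s, b) :=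
          (hΦd (s, b) hmem).differentiableAt (hU.mem_nhds hmem)
        exact hcomp.comp s (show DifferentiableAt ℝ (fun s' : ℝ => ((s', b) : ℝ × ℝ)) s from (differentiableAt_id.prodMk (differentiableAt_const b)))
      have hev : ψ =ᶠ[nhds s] fun s' => Φ (s', b) :=
        Filter.eventually_of_mem (Iio_mem_nhds (show s < b from hs)) fun s' hs' => hψΦ s' (ne_of_lt hs')
      exact hΦb.congr_of_eventuallyEq hev
    have hsub : Set.Icc x y ⊆ Set.Iio b := fun s hs => lt_of_le_of_lt hs.2 hb
    have hmono : MonotoneOn ψ (Set.Icc x y) := by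
      apply monotoneOn_of_deriv_nonneg (convex_Icc x y)
      · exact fun s hs => (hψs s (hsub hs)).continuousAt.continuousWithinAt
      · intro s hs
        rw [interior_Icc] at hs
        exact (hψs s (hsub (Set.Ioo_subset_Icc_self hs))).differentiableWithinAt
      · intro s hs
        rw [interior_Icc] at hs
        exact hmix s b (ne_of_lt (lt_trans hs.2 hb))
    exact hmono (Set.left_mem_Icc.2 hxy.le) (Set.right_mem_Icc.2 hxy.le) hxy.le
  -- Step B : for t₀ ∈ (y, z), g t = d x t - d y t is antitone on [t₀, z]
  set g : ℝ → ℝ := fun t => d x t - d y t with hgdef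
  have hgd : ∀ t : ℝ, y < t → DifferentiableAt ℝ g t := by
    intro t ht
    exact ((K1 x t (ne_of_lt (lt_trans hxy ht))).sub (K1 y t (ne_of_lt ht))).differentiableAt
  have stepB : ∀ t₀ ∈ Set.Ioo y z, d x z - d y z ≤ d x t₀ := by
    intro t₀ ht₀
    have hanti : AntitoneOn g (Set.Icc t₀ z) := by
      apply antitoneOn_of_deriv_nonpos (convex_Icc t₀ z)
      · exact fun t ht => (hgd t (lt_of_lt_of_le ht₀.1 ht.1)).continuousAt.continuousWithinAt
      · intro t ht
        rw [interior_Icc] at ht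
        exact (hgd t (lt_trans ht₀.1 ht.1)).differentiableWithinAt
      · intro t ht
        rw [interior_Icc] at ht
        have hyt : y < t := lt_trans ht₀.1 ht.1
        have h1 := (K1 x t (ne_of_lt (lt_trans hxy hyt)))
        have h2 := (K1 y t (ne_of_lt hyt))
        have hderiv : deriv g t = fderiv ℝ f (x, t) (0, 1) - fderiv ℝ f (y, t) (0, 1) :=
          (h1.sub h2).deriv
        rw [hderiv, sub_nonpos]
        calc fderiv ℝ f (x, t) (0, 1) = deriv (fun t' => d x t') t := h1.deriv.symm
          _ ≤ deriv (fun t' => d y t') t := stepA t hyt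
          _ = fderiv ℝ f (y, t) (0, 1) := h2.deriv
    have hz : g z ≤ g t₀ :=
      hanti (Set.left_mem_Icc.2 (le_of_lt ht₀.2)) (Set.right_mem_Icc.2 (le_of_lt ht₀.2)) (le_of_lt ht₀.2)
    have : d x t₀ - d y t₀ ≤ d x t₀ := by linarith [hnonneg y t₀]
    calc d x z - d y z = g z := rfl
      _ ≤ g t₀ := hz
      _ ≤ d x t₀ := this
  -- take the limit t₀ → y⁺
  have hcont : Filter.Tendsto (fun t => d x t) (nhdsWithin y (Set.Ioi y)) (nhds (d x y)) :=
    ((K1 x y (ne_of_lt hxy)).differentiableAt.continuousAt.tendsto).mono_left nhdsWithin_le_nhds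
  have hev : ∀ᶠ t in nhdsWithin y (Set.Ioi y), d x z - d y z ≤ d x t :=
    Filter.eventually_of_mem (Ioo_mem_nhdsGT_of_mem ⟨le_refl y, hyz⟩) stepB
  have hfinal : d x z - d y z ≤ d x y := ge_of_tendsto hcont hev
  linarith
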